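/- arXiv:2205.09527 — 3 statements merged into one kernel-verified Lean document; each statement's English description precedes it below -/
import Mathlib

section
/- Let x = [x_0 : ⋯ : x_n] ∈ ℙ(w)(K) be a point of weighted projective space over a number field K, and define the scaling ideal I_w(x) = ∏_{v finite} p_v^{min_i ⌊v(x_i)/w_i⌋}. Then the inverse fractional ideal satisfies I_w(x)^{-1} = {a ∈ K : a^{w_i} x_i ∈ O_K for all i}. -/
open NumberField IsDedekindDomain

/-- The additive normalized valuation at a finite place `v` of a number field `K`
(junk value `0` at `x = 0`). -/
noncomputable def addVal {K : Type*} [Field K] [NumberField K]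
    (v : HeightOneSpectrum (𝓞 K)) (x : K) : ℤ :=
  if h : (v.valuation K x : WithZero (Multiplicative ℤ)) = 0 then 0
  else -Multiplicative.toAdd (WithZero.unzero h)

namespace ScalingAux

variable {K : Type*} [Field K] [NumberField K]
variable {n : ℕ}

lemma addVal_zero (v : HeightOneSpectrum (𝓞 K)) : addVal v (0 : K) = 0 := by
  simp [addVal]

lemma valuation_eq (v : HeightOneSpectrum (𝓞 K)) {y : K} (hy : y ≠ 0) :
    (v.valuation K y : WithZero (Multiplicative ℤ)) = Multiplicative.ofAdd (-(addVal v y)) := by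
  have h0 : (v.valuation K y : WithZero (Multiplicative ℤ)) ≠ 0 :=
    (Valuation.ne_zero_iff _).mpr hy
  rw [addVal, dif_neg h0, neg_neg, ofAdd_toAdd, WithZero.coe_unzero]

lemma addVal_unique (v : HeightOneSpectrum (𝓞 K)) {y : K} (hy : y ≠ 0) {m : ℤ}
    (h : (v.valuation K y : WithZero (Multiplicative ℤ)) = Multiplicative.ofAdd (-m)) :
    addVal v y = m := by
  rw [valuation_eq v hy, WithZero.coe_inj] at h
  have := congrArg Multiplicative.toAdd h
  simpa using this

lemma le_addVal_iff (v : HeightOneSpectrum (𝓞 K)) {y : K} (hy : y ≠ 0) {m : ℤ} :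
    m ≤ addVal v y ↔
      (v.valuation K y : WithZero (Multiplicative ℤ)) ≤ Multiplicative.ofAdd (-m) := by
  rw [valuation_eq v hy, WithZero.coe_le_coe, Multiplicative.ofAdd_le, neg_le_neg_iff]

lemma addVal_mul (v : HeightOneSpectrum (𝓞 K)) {a b : K} (ha : a ≠ 0) (hb : b ≠ 0) :
    addVal v (a * b) = addVal v a + addVal v b := by
  apply addVal_unique v (mul_ne_zero ha hb)
  rw [map_mul, valuation_eq v ha, valuation_eq v hb, ← WithZero.coe_mul, WithZero.coe_inj,
    ← ofAdd_add, neg_add]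

lemma addVal_pow (v : HeightOneSpectrum (𝓞 K)) {a : K} (ha : a ≠ 0) (k : ℕ) :
    addVal v (a ^ k) = k * addVal v a := by
  induction k with
  | zero =>
    simp only [pow_zero, Nat.cast_zero, zero_mul]
    apply addVal_unique v one_ne_zero
    simp
  | succ k ih =>
    rw [pow_succ, addVal_mul v (pow_ne_zero _ ha) ha, ih]
    push_cast
    ring

lemma addVal_zpow (v : HeightOneSpectrum (𝓞 K)) {a : K} (ha : a ≠ 0) (k : ℤ) :
    addVal v (a ^ k) = k * addVal v a := by
  rcases k with k | k
  · simpa using addVal_pow v ha k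
  · rw [zpow_negSucc]
    have h1 : addVal v ((a ^ (k + 1))⁻¹) = -addVal v (a ^ (k + 1)) := by
      apply addVal_unique v (inv_ne_zero (pow_ne_zero _ ha))
      rw [map_inv₀, valuation_eq v (pow_ne_zero _ ha), ← WithZero.coe_inv, WithZero.coe_inj,
        ← ofAdd_neg, neg_neg]
    rw [h1, addVal_pow v ha, Int.negSucc_eq]
    push_cast
    ring



open IsDedekindDomain.HeightOneSpectrum UniqueFactorizationMonoid

lemma dvd_of_intVal {n d : 𝓞 K} (hn : n ≠ 0) (hd : d ≠ 0)
    (h : ∀ v : HeightOneSpectrum (𝓞 K), v.intValuationDef n ≤ v.intValuationDef d) :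
    d ∣ n := by
  classical
  rw [← Ideal.span_singleton_le_span_singleton]
  apply Ideal.le_of_dvd
  have hdspan : Ideal.span {d} ≠ (0 : Ideal (𝓞 K)) := by
    simpa [Submodule.zero_eq_bot, Ideal.span_singleton_eq_bot] using hd
  have hnspan : Ideal.span {n} ≠ (0 : Ideal (𝓞 K)) := by
    simpa [Submodule.zero_eq_bot, Ideal.span_singleton_eq_bot] using hn
  rw [dvd_iff_normalizedFactors_le_normalizedFactors hdspan hnspan, Multiset.le_iff_count]
  intro P
  by_cases hP : P ∈ normalizedFactors (Ideal.span {d})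
  swap
  · simp [Multiset.count_eq_zero_of_notMem hP]
  have hPprime : Prime P := prime_of_normalized_factor P hP
  have hPbot : P ≠ ⊥ := hPprime.ne_zero
  have hPisPrime : P.IsPrime := Ideal.isPrime_of_prime hPprime
  have hv := h ⟨P, hPisPrime, hPbot⟩
  rw [intValuationDef_if_neg _ hn, intValuationDef_if_neg _ hd, WithZero.exp_le_exp,
    neg_le_neg_iff, Nat.cast_le] at hv
  rwa [count_associates_factors_eq hdspan hPisPrime hPbot,
    count_associates_factors_eq hnspan hPisPrime hPbot] at hv

lemma mem_int {y : K} :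
    (∃ r : 𝓞 K, algebraMap (𝓞 K) K r = y) ↔
      ∀ v : HeightOneSpectrum (𝓞 K), 0 ≤ addVal v y := by
  constructor
  · rintro ⟨r, rfl⟩ v
    by_cases hr : (algebraMap (𝓞 K) K r) = 0
    · rw [hr, addVal_zero]
    rw [le_addVal_iff v hr]
    simpa using v.valuation_le_one (K := K) r
  · intro h
    by_cases hy : y = 0
    · exact ⟨0, by simp [hy]⟩
    have h1 : ∀ v : HeightOneSpectrum (𝓞 K),
        (v.valuation K y : WithZero (Multiplicative ℤ)) ≤ 1 := by
      intro v
      have := (le_addVal_iff v hy).mp (h v)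
      simpa using this
    obtain ⟨⟨n, d⟩, hnd⟩ := IsLocalization.surj (nonZeroDivisors (𝓞 K)) y
    have hd0 : (d : 𝓞 K) ≠ 0 := nonZeroDivisors.ne_zero d.2
    have hdK : algebraMap (𝓞 K) K (d : 𝓞 K) ≠ 0 := by
      simpa using (FaithfulSMul.algebraMap_injective (𝓞 K) K).ne hd0
    have hn0 : n ≠ 0 := by
      rintro rfl
      simp only [map_zero] at hnd
      exact hy (by simpa [hdK] using mul_eq_zero.mp hnd)
    have hvle : ∀ v : HeightOneSpectrum (𝓞 K),
        v.intValuationDef n ≤ v.intValuationDef (d : 𝓞 K) := by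
      intro v
      have h2 : v.valuation K (algebraMap (𝓞 K) K n) =
          v.valuation K y * v.valuation K (algebraMap (𝓞 K) K (d : 𝓞 K)) := by
        rw [← map_mul, hnd]
      rw [valuation_of_algebraMap, valuation_of_algebraMap] at h2
      calc v.intValuationDef n = v.valuation K y * v.intValuationDef (d : 𝓞 K) := by
            rw [← intValuation_apply, ← intValuation_apply, ← h2]
        _ ≤ 1 * v.intValuationDef (d : 𝓞 K) := mul_le_mul_left (h1 v) _
        _ = _ := one_mul _
    obtain ⟨t, ht⟩ := dvd_of_intVal hn0 hd0 hvle
    refine ⟨t, ?_⟩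
    apply mul_right_cancel₀ hdK
    rw [hnd, ht, map_mul, mul_comm]


lemma finite_intVal_lt_one {r : 𝓞 K} (hr : r ≠ 0) :
    {v : HeightOneSpectrum (𝓞 K) | v.intValuationDef r < 1}.Finite := by
  simp_rw [← intValuation_apply, intValuation_lt_one_iff_dvd]
  apply Ideal.finite_factors
  simpa [Submodule.zero_eq_bot, Ideal.span_singleton_eq_bot] using hr

lemma finite_addVal_ne_zero {y : K} (hy : y ≠ 0) :
    {v : HeightOneSpectrum (𝓞 K) | addVal v y ≠ 0}.Finite := by
  obtain ⟨⟨nn, dd⟩, hnd⟩ := IsLocalization.surj (nonZeroDivisors (𝓞 K)) y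
  have hd0 : (dd : 𝓞 K) ≠ 0 := nonZeroDivisors.ne_zero dd.2
  have hdK : algebraMap (𝓞 K) K (dd : 𝓞 K) ≠ 0 := by
    simpa using (FaithfulSMul.algebraMap_injective (𝓞 K) K).ne hd0
  have hn0 : nn ≠ 0 := by
    rintro rfl
    simp only [map_zero] at hnd
    exact hy (by simpa [hdK] using mul_eq_zero.mp hnd)
  apply Set.Finite.subset ((finite_intVal_lt_one hn0).union (finite_intVal_lt_one hd0))
  intro v hv
  simp only [Set.mem_setOf_eq] at hv
  by_contra hcon
  simp only [Set.mem_union, Set.mem_setOf_eq, not_or, not_lt] at hcon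
  have h1 : v.intValuationDef nn = 1 := le_antisymm (v.intValuation_le_one nn) hcon.1
  have h2 : v.intValuationDef (dd : 𝓞 K) = 1 := le_antisymm (v.intValuation_le_one _) hcon.2
  have h3 : v.valuation K y = 1 := by
    have h4 : v.valuation K y * v.valuation K (algebraMap (𝓞 K) K (dd : 𝓞 K)) =
        v.valuation K (algebraMap (𝓞 K) K nn) := by rw [← map_mul, hnd]
    rw [valuation_of_algebraMap, valuation_of_algebraMap, intValuation_apply,
      intValuation_apply, h1, h2, mul_one] at h4
    exact h4
  apply hv
  apply addVal_unique v hy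
  rw [h3]
  simp


lemma exists_elt (m : HeightOneSpectrum (𝓞 K) → ℤ)
    (hm : {v : HeightOneSpectrum (𝓞 K) | m v ≠ 0}.Finite) (v : HeightOneSpectrum (𝓞 K)) :
    ∃ b : K, b ≠ 0 ∧ addVal v b = m v ∧ ∀ v', m v' ≤ addVal v' b := by
  classical
  obtain ⟨π, hπ⟩ := valuation_exists_uniformizer K v
  have hπ0 : π ≠ 0 := by
    intro h
    rw [h, map_zero] at hπ
    exact WithZero.coe_ne_zero hπ.symm
  have hπ1 : addVal v π = 1 := addVal_unique v hπ0 (by rw [hπ]; rfl)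
  set b' : K := π ^ (m v) with hb'
  have hb'0 : b' ≠ 0 := zpow_ne_zero _ hπ0
  have hb'v : addVal v b' = m v := by rw [hb', addVal_zpow v hπ0, hπ1, mul_one]
  have hTfin : {v' : HeightOneSpectrum (𝓞 K) | addVal v' b' < m v'}.Finite := by
    apply Set.Finite.subset ((finite_addVal_ne_zero hπ0).union hm)
    intro v' hv'
    simp only [Set.mem_setOf_eq] at hv'
    by_contra hcon
    simp only [Set.mem_union, Set.mem_setOf_eq, not_or, not_not] at hcon
    have h0 : addVal v' b' = 0 := by rw [hb', addVal_zpow v' hπ0, hcon.1, mul_zero]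
    rw [h0, hcon.2] at hv'
    exact lt_irrefl 0 hv'
  have hvT : v ∉ {v' : HeightOneSpectrum (𝓞 K) | addVal v' b' < m v'} := by
    simp [hb'v]
  set N : HeightOneSpectrum (𝓞 K) → ℕ := fun v' => (m v' - addVal v' b').toNat with hN
  set Q : Ideal (𝓞 K) := ∏ v' ∈ hTfin.toFinset, v'.asIdeal ^ (N v') with hQ
  have hQv : ¬ (Q ≤ v.asIdeal) := by
    intro hle
    have hdvd : v.asIdeal ∣ Q := Ideal.dvd_iff_le.mpr hle
    obtain ⟨v', hv'T, hdvd'⟩ := (Prime.dvd_finset_prod_iff v.prime _).mp hdvd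
    have h5 : v.asIdeal ∣ v'.asIdeal := v.prime.dvd_of_dvd_pow hdvd'
    have h7 : v'.asIdeal = v.asIdeal :=
      (HeightOneSpectrum.isMaximal v').eq_of_le v.isPrime.ne_top (Ideal.le_of_dvd h5)
    have h8 : v' = v := HeightOneSpectrum.ext h7
    rw [h8] at hv'T
    exact hvT (hTfin.mem_toFinset.mp hv'T)
  obtain ⟨s, hsQ, hsv⟩ := SetLike.not_le_iff_exists.mp hQv
  have hs0 : s ≠ 0 := by rintro rfl; exact hsv (zero_mem _)
  have hsK : algebraMap (𝓞 K) K s ≠ 0 := by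
    simpa using (FaithfulSMul.algebraMap_injective (𝓞 K) K).ne hs0
  have hS0 : ∀ v'' : HeightOneSpectrum (𝓞 K), 0 ≤ addVal v'' (algebraMap (𝓞 K) K s) :=
    mem_int.mp ⟨s, rfl⟩
  have hsvval : addVal v (algebraMap (𝓞 K) K s) = 0 := by
    have h9 : ¬ v.intValuationDef s < 1 := by
      rw [← intValuation_apply, intValuation_lt_one_iff_dvd, Ideal.dvd_span_singleton]
      exact hsv
    have h10 : v.intValuationDef s = 1 :=
      le_antisymm (v.intValuation_le_one s) (not_lt.mp h9)
    apply addVal_unique v hsK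
    rw [valuation_of_algebraMap, intValuation_apply, h10]
    simp
  refine ⟨b' * algebraMap (𝓞 K) K s, mul_ne_zero hb'0 hsK, ?_, ?_⟩
  · rw [addVal_mul v hb'0 hsK, hb'v, hsvval, add_zero]
  · intro v'
    rw [addVal_mul v' hb'0 hsK]
    by_cases hv'T : v' ∈ {u : HeightOneSpectrum (𝓞 K) | addVal u b' < m u}
    · have hk : (v'.asIdeal ^ (N v') : Ideal (𝓞 K)) ∣ Q :=
        Finset.dvd_prod_of_mem _ (hTfin.mem_toFinset.mpr hv'T)
      have h11 : v'.asIdeal ^ N v' ∣ Ideal.span {s} :=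
        Ideal.dvd_span_singleton.mpr ((Ideal.le_of_dvd hk) hsQ)
      have h12 : (N v' : ℤ) ≤ addVal v' (algebraMap (𝓞 K) K s) := by
        rw [le_addVal_iff v' hsK, valuation_of_algebraMap, intValuation_apply]
        exact (intValuation_le_pow_iff_dvd v' s (N v')).mpr h11
      have h13 : m v' - addVal v' b' ≤ (N v' : ℤ) := Int.self_le_toNat _
      linarith only [h12, h13]
    · simp only [Set.mem_setOf_eq, not_lt] at hv'T
      linarith only [hv'T, hS0 v']

lemma int1 {w A X : ℤ} (hw : 0 < w) (h : 0 ≤ w * A + X) : 0 ≤ A + X.fdiv w := by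
  rw [Int.fdiv_eq_ediv_of_nonneg _ hw.le]
  have h1 := Int.mul_ediv_add_emod X w
  have h2 := Int.emod_nonneg X hw.ne'
  have h3 := Int.emod_lt_of_pos X hw
  nlinarith [h1, h2, h3, h]

lemma int2 {w A X : ℤ} (hw : 0 < w) (h : 0 ≤ A + X.fdiv w) : 0 ≤ w * A + X := by
  rw [Int.fdiv_eq_ediv_of_nonneg _ hw.le] at h
  have h1 := Int.mul_ediv_add_emod X w
  have h2 := Int.emod_nonneg X hw.ne'
  nlinarith [h1, h2, h]

end ScalingAux

open ScalingAux

/-- The inverse of the scaling ideal: if `x = [x_0 : ⋯ : x_n] ∈ ℙ(w)(K)` and the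
fractional ideal `I = I_w(x) = ∏_v p_v^{min_i ⌊v(x_i)/w_i⌋}` (characterized by
`a ∈ I ↔ v(a) ≥ min_i ⌊v(x_i)/w_i⌋` for all finite `v`, the min being over `i` with
`x_i ≠ 0`), then `I⁻¹ = {a ∈ K : a^{w_i} x_i ∈ O_K for all i}`. -/
theorem scalingIdeal_inv {K : Type*} [Field K] [NumberField K] {n : ℕ}
    (w : Fin (n + 1) → ℕ) (hw : ∀ i, 0 < w i)
    (x : Fin (n + 1) → K) (hx : x ≠ 0)
    (I : FractionalIdeal (nonZeroDivisors (𝓞 K)) K) (hI0 : I ≠ 0)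
    (hI : ∀ a : K, a ≠ 0 →
      (a ∈ I ↔ ∀ v : HeightOneSpectrum (𝓞 K),
        sInf {m : ℤ | ∃ i, x i ≠ 0 ∧ m = Int.fdiv (addVal v (x i)) (w i)}
          ≤ addVal v a)) :
    ∀ a : K, (a ∈ I⁻¹ ↔
      ∀ i, ∃ r : 𝓞 K, algebraMap (𝓞 K) K r = a ^ (w i) * x i) := by
  set M : HeightOneSpectrum (𝓞 K) → ℤ :=
    fun v => sInf {m : ℤ | ∃ i, x i ≠ 0 ∧ m = Int.fdiv (addVal v (x i)) (w i)} with hM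
  obtain ⟨i0, hi0⟩ : ∃ i0, x i0 ≠ 0 := by
    simpa [Function.ne_iff] using hx
  have hSfin : ∀ v : HeightOneSpectrum (𝓞 K),
      {m : ℤ | ∃ i, x i ≠ 0 ∧ m = Int.fdiv (addVal v (x i)) (w i)}.Finite := fun v =>
    Set.Finite.subset (Set.finite_range fun i => Int.fdiv (addVal v (x i)) (w i))
      (by rintro m ⟨i, -, rfl⟩; exact ⟨i, rfl⟩)
  have hSne : ∀ v : HeightOneSpectrum (𝓞 K),
      {m : ℤ | ∃ i, x i ≠ 0 ∧ m = Int.fdiv (addVal v (x i)) (w i)}.Nonempty := fun v =>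
    ⟨_, i0, hi0, rfl⟩
  have hMmem : ∀ v : HeightOneSpectrum (𝓞 K),
      ∃ i, x i ≠ 0 ∧ M v = Int.fdiv (addVal v (x i)) (w i) := fun v =>
    (hSne v).csInf_mem (hSfin v)
  have hMle : ∀ (v : HeightOneSpectrum (𝓞 K)) i, x i ≠ 0 →
      M v ≤ Int.fdiv (addVal v (x i)) (w i) := fun v i hi =>
    csInf_le (hSfin v).bddBelow ⟨i, hi, rfl⟩
  have hMsupp : {v : HeightOneSpectrum (𝓞 K) | M v ≠ 0}.Finite := by
    apply Set.Finite.subset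
      (Set.Finite.biUnion (Set.toFinite {i | x i ≠ 0})
        (fun i hi => finite_addVal_ne_zero hi))
    intro v hv
    simp only [Set.mem_setOf_eq] at hv
    by_contra hc
    simp only [Set.mem_iUnion, Set.mem_setOf_eq, not_exists, not_and, not_not] at hc
    obtain ⟨i, hi, hMv⟩ := hMmem v
    rw [hc i hi, Int.zero_fdiv] at hMv
    exact hv hMv
  intro a
  by_cases ha : a = 0
  · constructor
    · intro _ i
      exact ⟨0, by simp [ha, zero_pow (hw i).ne']⟩
    · intro _
      rw [ha]
      exact FractionalIdeal.zero_mem _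
  constructor
  · intro haI i
    by_cases hxi0 : x i = 0
    · exact ⟨0, by simp [hxi0]⟩
    apply mem_int.mpr
    intro v
    rw [addVal_mul v (pow_ne_zero _ ha) hxi0, addVal_pow v ha]
    obtain ⟨b, hb0, hbv, hble⟩ := exists_elt M hMsupp v
    have hbI : b ∈ I := (hI b hb0).mpr fun v' => hble v'
    have habO : a * b ∈ (1 : FractionalIdeal (nonZeroDivisors (𝓞 K)) K) :=
      (FractionalIdeal.mem_inv_iff hI0).mp haI b hbI
    have h0 : 0 ≤ addVal v (a * b) :=
      mem_int.mp ((FractionalIdeal.mem_one_iff _).mp habO) v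
    rw [addVal_mul v ha hb0, hbv] at h0
    have h1 := hMle v i hxi0
    exact int2 (by exact_mod_cast hw i) (by linarith)
  · intro h
    rw [FractionalIdeal.mem_inv_iff hI0]
    intro y hyI
    by_cases hy0 : y = 0
    · rw [hy0, mul_zero]
      exact FractionalIdeal.zero_mem _
    rw [FractionalIdeal.mem_one_iff]
    apply mem_int.mpr
    intro v
    rw [addVal_mul v ha hy0]
    have hyv := (hI y hy0).mp hyI v
    obtain ⟨i, hxi0, hMvi⟩ := hMmem v
    have h0 : 0 ≤ addVal v (a ^ w i * x i) := mem_int.mp (h i) v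
    rw [addVal_mul v (pow_ne_zero _ ha) hxi0, addVal_pow v ha] at h0
    have h1 : 0 ≤ addVal v a + Int.fdiv (addVal v (x i)) (w i) :=
      int1 (by exact_mod_cast hw i) h0
    rw [← hMvi] at h1
    linarith
end

section
/- Let Λ ⊂ ℝ^n be a full-rank lattice with successive minima λ_1 ≤ ⋯ ≤ λ_n. Then λ_1 ⋯ λ_n ≥ (2^n / (n! · vol(B_n))) · det(Λ), where B_n is the unit ball in ℝ^n. -/
open MeasureTheory ZLattice

section aux

variable {n : ℕ} {Λ : Submodule ℤ (EuclideanSpace ℝ (Fin n))}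

/-- Auxiliary: from the successive minima data we can extract a "flag" of linearly
independent lattice vectors `v 0, …, v (k-1)` with `‖v j‖ ≤ lam j`. -/
lemma mink_exists_flag (lam : Fin n → ℝ)
    (hlam : ∀ i : Fin n, ∃ s : Fin ((i : ℕ) + 1) → Λ,
      LinearIndependent ℝ (fun j => (s j : EuclideanSpace ℝ (Fin n))) ∧
      ∀ j, ‖(s j : EuclideanSpace ℝ (Fin n))‖ ≤ lam i) :
    ∀ k : ℕ, ∀ hk : k ≤ n, ∃ v : Fin k → Λ,
      LinearIndependent ℝ (fun j => (v j : EuclideanSpace ℝ (Fin n))) ∧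
      ∀ j, ‖(v j : EuclideanSpace ℝ (Fin n))‖ ≤ lam (Fin.castLE hk j) := by
  intro k
  induction k with
  | zero => exact fun _ => ⟨fun j => 0, linearIndependent_empty_type, fun j => j.elim0⟩
  | succ k ih =>
    intro hk
    obtain ⟨v, hvi, hvn⟩ := ih (Nat.le_of_succ_le hk)
    obtain ⟨s, hsi, hsn⟩ := hlam ⟨k, hk⟩
    have hex : ∃ j, (s j : EuclideanSpace ℝ (Fin n)) ∉
        Submodule.span ℝ (Set.range fun j => (v j : EuclideanSpace ℝ (Fin n))) := by
      by_contra h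
      push_neg at h
      classical
      set W := Submodule.span ℝ (Set.range fun j => (v j : EuclideanSpace ℝ (Fin n))) with hW
      have hti : LinearIndependent ℝ
          (fun j => (⟨(s j : EuclideanSpace ℝ (Fin n)), h j⟩ : W)) := by
        apply LinearIndependent.of_comp W.subtype
        exact hsi
      have h1 : k + 1 ≤ Module.finrank ℝ W := by
        simpa using hti.fintype_card_le_finrank
      have h2 : Module.finrank ℝ W ≤ k := by
        refine (finrank_span_le_card _).trans ?_
        rw [Set.toFinset_range]
        exact (Finset.card_image_le).trans (by simp)
      omega
    obtain ⟨j, hj⟩ := hex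
    refine ⟨Fin.snoc v (s j), ?_, ?_⟩
    · have hco : (fun j2 => ((Fin.snoc v (s j) : Fin (k + 1) → Λ) j2 :
          EuclideanSpace ℝ (Fin n))) =
        Fin.snoc (fun j2 => (v j2 : EuclideanSpace ℝ (Fin n)))
          (s j : EuclideanSpace ℝ (Fin n)) :=
        Fin.comp_snoc _ _ _
      rw [hco]
      exact linearIndependent_fin_snoc.mpr ⟨hvi, hj⟩
    · intro j2
      refine Fin.lastCases ?_ ?_ j2
      · simp only [Fin.snoc_last]
        have h3 : Fin.castLE hk (Fin.last k) = ⟨k, hk⟩ := rfl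
        rw [h3]; exact hsn j
      · intro i
        simp only [Fin.snoc_castSucc]
        have h4 : Fin.castLE hk i.castSucc = Fin.castLE (Nat.le_of_succ_le hk) i := rfl
        rw [h4]; exact hvn i

end aux

/-- Minkowski's second theorem (lower bound): for a full-rank lattice `Λ ⊂ ℝ^n` with
successive minima `λ_1 ≤ ⋯ ≤ λ_n` (with respect to the Euclidean unit ball), one has
`λ_1 ⋯ λ_n ≥ (2^n / (n! · vol(B_n))) · det(Λ)`, where `B_n` is the unit ball and
`det(Λ)` the covolume of `Λ`. -/
theorem minkowski_second_lower (n : ℕ) (hn : 0 < n)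
    (Λ : Submodule ℤ (EuclideanSpace ℝ (Fin n)))
    [DiscreteTopology Λ] [IsZLattice ℝ Λ]
    (lam : Fin n → ℝ)
    (hlam : ∀ i : Fin n,
      IsLeast {r : ℝ | ∃ s : Fin ((i : ℕ) + 1) → Λ,
        LinearIndependent ℝ (fun j => (s j : EuclideanSpace ℝ (Fin n))) ∧
        ∀ j, ‖(s j : EuclideanSpace ℝ (Fin n))‖ ≤ r} (lam i)) :
    (2 : ℝ) ^ n / ((n.factorial : ℝ) *
        (volume (Metric.ball (0 : EuclideanSpace ℝ (Fin n)) 1)).toReal) *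
        ZLattice.covolume Λ
      ≤ ∏ i : Fin n, lam i := by
  classical
  haveI : Nonempty (Fin n) := ⟨⟨0, hn⟩⟩
  -- positivity of the successive minima
  have hlampos : ∀ i, 0 < lam i := by
    intro i
    obtain ⟨s, hsi, hsn⟩ := (hlam i).1
    have h0 : (s 0 : EuclideanSpace ℝ (Fin n)) ≠ 0 := hsi.ne_zero 0
    calc (0:ℝ) < ‖(s 0 : EuclideanSpace ℝ (Fin n))‖ := norm_pos_iff.mpr h0
    _ ≤ lam i := hsn 0
  -- a flag of independent lattice vectors realizing the minima
  obtain ⟨v, hvi, hvn⟩ := mink_exists_flag lam (fun i => (hlam i).1) n le_rfl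
  have hvn' : ∀ j, ‖(v j : EuclideanSpace ℝ (Fin n))‖ ≤ lam j := by
    intro j
    have := hvn j
    simpa using this
  set vv : Fin n → EuclideanSpace ℝ (Fin n) := fun j => (v j : EuclideanSpace ℝ (Fin n))
    with hvv
  -- bases
  let b₀ : Module.Basis (Fin n) ℝ (EuclideanSpace ℝ (Fin n)) :=
    (EuclideanSpace.basisFun (Fin n) ℝ).toBasis
  have hcard : Fintype.card (Module.Free.ChooseBasisIndex ℤ Λ) = n := by
    rw [← Module.finrank_eq_card_chooseBasisIndex, ZLattice.rank ℝ Λ,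
      finrank_euclideanSpace_fin]
  let b : Module.Basis (Fin n) ℤ Λ :=
    (Module.Free.chooseBasis ℤ Λ).reindex (Fintype.equivFinOfCardEq hcard)
  let bR : Module.Basis (Fin n) ℝ (EuclideanSpace ℝ (Fin n)) := Module.Basis.ofZLatticeBasis ℝ Λ b
  have hbb : ((↑) ∘ ⇑b : Fin n → EuclideanSpace ℝ (Fin n)) = ⇑bR :=
    funext fun i => (b.ofZLatticeBasis_apply ℝ Λ i).symm
  -- covolume in terms of determinant
  have hcov : ZLattice.covolume Λ = |b₀.det ⇑bR| := by
    rw [ZLattice.covolume_eq_det_mul_measureReal Λ volume b b₀, ← hbb]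
    have h1 : volume (ZSpan.fundamentalDomain b₀) = 1 := by
      rw [measure_congr (ZSpan.fundamentalDomain_ae_parallelepiped b₀ volume)]
      have : ⇑b₀ = ⇑(EuclideanSpace.basisFun (Fin n) ℝ) :=
        (EuclideanSpace.basisFun (Fin n) ℝ).coe_toBasis
      rw [this]
      exact (EuclideanSpace.basisFun (Fin n) ℝ).volume_parallelepiped
    rw [measureReal_def, h1, ENNReal.toReal_one, mul_one]
  -- the integer matrix of `v` in the lattice basis
  set m : Matrix (Fin n) (Fin n) ℤ := Matrix.of fun i j => b.repr (v j) i with hm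
  have hmat : bR.toMatrix vv = m.map (Int.cast : ℤ → ℝ) := by
    ext i j
    rw [Module.Basis.toMatrix_apply]
    simp only [hvv, hm, Matrix.map_apply, Matrix.of_apply]
    exact b.ofZLatticeBasis_repr_apply ℝ Λ (v j) i
  have hdetZ : bR.det vv = ((m.det : ℤ) : ℝ) := by
    rw [Module.Basis.det_apply, hmat]
    exact (RingHom.map_det (Int.castRingHom ℝ) m).symm
  -- nonvanishing of the determinant of `v`
  have hfr : Fintype.card (Fin n) =
      Module.finrank ℝ (EuclideanSpace ℝ (Fin n)) := by
    simp [finrank_euclideanSpace_fin]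
  have hne : bR.det vv ≠ 0 := by
    let c : Module.Basis (Fin n) ℝ (EuclideanSpace ℝ (Fin n)) :=
      basisOfLinearIndependentOfCardEqFinrank hvi hfr
    have hc : vv = ⇑c := (coe_basisOfLinearIndependentOfCardEqFinrank hvi hfr).symm
    rw [hc]
    exact (bR.isUnit_det c).ne_zero
  have hm1 : (1 : ℝ) ≤ |bR.det vv| := by
    rw [hdetZ, ← Int.cast_abs]
    have : m.det ≠ 0 := by
      intro h
      rw [hdetZ, h] at hne
      exact hne (by norm_num)
    exact_mod_cast Int.one_le_abs this
  -- cocycle: `b₀.det vv = b₀.det bR * bR.det vv`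
  have hfact : b₀.det vv = b₀.det ⇑bR * bR.det vv := by
    rw [Module.Basis.det_apply, Module.Basis.det_apply, Module.Basis.det_apply, ← Matrix.det_mul,
      Module.Basis.toMatrix_mul_toMatrix]
  have hDge : ZLattice.covolume Λ ≤ |b₀.det vv| := by
    rw [hcov, hfact, abs_mul]
    nlinarith [abs_nonneg (b₀.det ⇑bR)]
  -- the linear map sending the standard basis to `(lam i)⁻¹ • v i`
  set w : Fin n → EuclideanSpace ℝ (Fin n) := fun i => (lam i)⁻¹ • vv i with hw
  set T : EuclideanSpace ℝ (Fin n) →ₗ[ℝ] EuclideanSpace ℝ (Fin n) := b₀.constr ℝ w with hT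
  have hTb : ∀ i, T (b₀ i) = w i := fun i => b₀.constr_basis ℝ w i
  have hTdet : LinearMap.det T = (∏ i, (lam i)⁻¹) * b₀.det vv := by
    have h1 : T ∘ ⇑b₀ = w := funext hTb
    have h2 := b₀.det_comp T ⇑b₀
    rw [h1, Module.Basis.det_self, mul_one] at h2
    rw [← h2]
    have h3 := (b₀.det).toMultilinearMap.map_smul_univ (fun i => (lam i)⁻¹) vv
    simpa [hw] using h3
  -- the cross-polytope and its volume
  set U : Set (EuclideanSpace ℝ (Fin n)) := {x | ∑ i, |x i| < 1} with hU
  have hUvol : volume U = ENNReal.ofReal (2 ^ n / n.factorial) := by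
    have hmeas : MeasurableSet {x : Fin n → ℝ | ∑ i, |x i| < 1} := by
      apply measurableSet_lt (by fun_prop) measurable_const
    have h1 := (EuclideanSpace.volume_preserving_symm_measurableEquiv_toLp
      (Fin n)).measure_preimage hmeas.nullMeasurableSet
    have h2 : U = (MeasurableEquiv.toLp 2 (Fin n → ℝ)).symm ⁻¹'
        {x : Fin n → ℝ | ∑ i, |x i| < 1} := rfl
    rw [h2, h1]
    have h3 := MeasureTheory.volume_sum_rpow_lt_one (Fin n) (p := 1) le_rfl
    simp only [Real.rpow_one] at h3
    rw [h3]
    congr 1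
    rw [Fintype.card_fin, show (1 : ℝ) / 1 + 1 = 2 by norm_num, Real.Gamma_two,
      show (n : ℝ) / 1 + 1 = (n : ℝ) + 1 by ring, Real.Gamma_nat_eq_factorial]
    ring
  -- the image of the cross-polytope lies in the unit ball
  have himg : T '' U ⊆ Metric.ball 0 1 := by
    rintro x ⟨y, hy, rfl⟩
    rw [mem_ball_zero_iff]
    have hTy : T y = ∑ i, y i • w i := by
      rw [hT, Module.Basis.constr_apply_fintype]
      congr 1
    calc ‖T y‖ ≤ ∑ i, ‖y i • w i‖ := by rw [hTy]; exact norm_sum_le _ _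
      _ ≤ ∑ i, |y i| := by
          refine Finset.sum_le_sum fun i _ => ?_
          rw [norm_smul, Real.norm_eq_abs]
          have hwle : ‖w i‖ ≤ 1 := by
            rw [hw, norm_smul, Real.norm_eq_abs,
              abs_of_nonneg (inv_nonneg.mpr (hlampos i).le)]
            rw [inv_mul_le_iff₀ (hlampos i)]
            simpa using hvn' i
          nlinarith [abs_nonneg (y i), norm_nonneg (w i)]
      _ < 1 := hy
  -- volume comparison
  have hvol : ENNReal.ofReal |LinearMap.det T| * volume U ≤
      volume (Metric.ball (0 : EuclideanSpace ℝ (Fin n)) 1) := by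
    rw [← MeasureTheory.Measure.addHaar_image_linearMap volume T U]
    exact measure_mono himg
  have hball_fin : volume (Metric.ball (0 : EuclideanSpace ℝ (Fin n)) 1) ≠ ⊤ :=
    measure_ball_lt_top.ne
  set V := (volume (Metric.ball (0 : EuclideanSpace ℝ (Fin n)) 1)).toReal with hV
  have hVpos : 0 < V :=
    ENNReal.toReal_pos (Metric.measure_ball_pos volume 0 one_pos).ne' hball_fin
  have hreal : |LinearMap.det T| * (2 ^ n / n.factorial) ≤ V := by
    rw [hUvol] at hvol
    have h4 := ENNReal.toReal_mono hball_fin hvol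
    rwa [ENNReal.toReal_mul, ENNReal.toReal_ofReal (abs_nonneg _),
      ENNReal.toReal_ofReal (by positivity)] at h4
  -- final arithmetic
  set P : ℝ := ∏ i, lam i with hP
  have hPpos : 0 < P := Finset.prod_pos fun i _ => hlampos i
  set D : ℝ := |b₀.det vv| with hD
  have hDpos : 0 < D := lt_of_lt_of_le (ZLattice.covolume_pos Λ volume) hDge
  have hTabs : |LinearMap.det T| = P⁻¹ * D := by
    rw [hTdet, abs_mul, hD]
    congr 1
    rw [abs_of_nonneg (Finset.prod_nonneg fun i _ => inv_nonneg.mpr (hlampos i).le),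
      ← Finset.prod_inv_distrib]
  rw [hTabs] at hreal
  have hfacpos : (0 : ℝ) < n.factorial := by exact_mod_cast n.factorial_pos
  have h2 : D * ((2:ℝ) ^ n / n.factorial) ≤ P * V := by
    have h5 := mul_le_mul_of_nonneg_left hreal hPpos.le
    have hPP : P⁻¹ * P = 1 := inv_mul_cancel₀ hPpos.ne'
    calc D * ((2:ℝ) ^ n / n.factorial)
        = (P⁻¹ * P) * (D * ((2:ℝ)^n / n.factorial)) := by rw [hPP, one_mul]
      _ = P * (P⁻¹ * D * ((2:ℝ)^n / n.factorial)) := by ring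
      _ ≤ P * V := h5
  rw [div_mul_eq_mul_div, div_le_iff₀ (by positivity)]
  calc (2:ℝ) ^ n * ZLattice.covolume Λ ≤ (2:ℝ) ^ n * D :=
        mul_le_mul_of_nonneg_left hDge (by positivity)
    _ = (D * ((2:ℝ) ^ n / n.factorial)) * n.factorial := by field_simp
    _ ≤ (P * V) * n.factorial := mul_le_mul_of_nonneg_right h2 hfacpos.le
    _ = P * ((n.factorial : ℝ) * V) := by ring
end

section
/- Let K be a number field with r_1 real and r_2 complex embeddings and regulator R_K, and let w = (w_0,...,w_n) be positive integer weights with |w| = ∑ w_i. Let F(1) be the fundamental domain for the w-weighted action of O_K^× on ∏_{v|∞}(K_v^{n+1} \ {0}) intersected with {Ht_{w,∞} ≤ 1}, constructed via the Dirichlet unit lattice. Then F(1) is a bounded subset of K_∞^{n+1}. -/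
open NumberField

/-- The archimedean part of the weighted height on `∏_{v|∞}(K_v^{n+1} \ {0})`:
`Ht_{w,∞}(x) = ∏_{v|∞} max_i |x_{v,i}|_v^{1/w_i}`, where `|·|_v` is the normalized
absolute value at the infinite place `v` (given by `|z|_v = |z|^{mult v}` under the
embedding `K_v ↪ ℂ`). -/
noncomputable def archHeight {K : Type*} [Field K] [NumberField K] {n : ℕ}
    (w : Fin (n + 1) → ℕ) (x : InfinitePlace K → Fin (n + 1) → ℂ) : ℝ :=
  ∏ v : InfinitePlace K,
    ⨆ i : Fin (n + 1), (‖x v i‖ ^ (v.mult : ℝ)) ^ ((1 : ℝ) / (w i))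

/-- The logarithm map `η : ∏_{v|∞}(K_v^{n+1} \ {0}) → ℝ^{r₁+r₂}`,
`η(x)_v = log max_i |x_{v,i}|_v^{1/w_i}`. -/
noncomputable def etaMap {K : Type*} [Field K] [NumberField K] {n : ℕ}
    (w : Fin (n + 1) → ℕ) (x : InfinitePlace K → Fin (n + 1) → ℂ) :
    InfinitePlace K → ℝ := fun v =>
  Real.log (⨆ i : Fin (n + 1), (‖x v i‖ ^ (v.mult : ℝ)) ^ ((1 : ℝ) / (w i)))

/-- The projection `pr : ℝ^{r₁+r₂} → H` onto the hyperplane `H = {∑ x_v = 0}` along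
the vector `(d_v)` with `d_v = mult v`: `pr(y)_v = y_v − (1/d ∑ y_{v'}) d_v`. -/
noncomputable def prMap (K : Type*) [Field K] [NumberField K]
    (y : InfinitePlace K → ℝ) : InfinitePlace K → ℝ := fun v =>
  y v - ((∑ v' : InfinitePlace K, y v') / (Module.finrank ℚ K)) * (v.mult : ℕ)

/-- Boundedness of the fundamental domain `F(1)`: if `F̃` is a bounded subset of the
trace-zero hyperplane `H = {y : ∑_v y_v = 0}` (e.g. a fundamental parallelepiped for
the Dirichlet unit lattice), then the set
`F(1) = {x ∈ ∏_{v|∞}(K_v^{n+1} \ {0}) : pr(η(x)) ∈ F̃ and Ht_{w,∞}(x) ≤ 1}`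
is a bounded subset of `K_∞^{n+1}`. -/
theorem fundamentalDomain_bounded {K : Type*} [Field K] [NumberField K] {n : ℕ}
    (w : Fin (n + 1) → ℕ) (hw : ∀ i, 0 < w i)
    (Ftil : Set (InfinitePlace K → ℝ))
    (hFtilH : ∀ y ∈ Ftil, ∑ v : InfinitePlace K, y v = 0)
    (hFtilBdd : Bornology.IsBounded Ftil) :
    Bornology.IsBounded
      {x : InfinitePlace K → Fin (n + 1) → ℂ |
        (∀ v, x v ≠ 0) ∧ prMap K (etaMap w x) ∈ Ftil ∧ archHeight w x ≤ 1} := by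

  obtain ⟨C, hC⟩ := isBounded_iff_forall_norm_le.mp hFtilBdd
  set D : ℝ := max C 0 with hD
  have hD0 : 0 ≤ D := le_max_right _ _
  set W : ℝ := ∑ i : Fin (n + 1), (w i : ℝ) with hWdef
  have hW0 : 0 ≤ W := Finset.sum_nonneg fun i _ => by positivity
  have hDW : 0 ≤ D * W := mul_nonneg hD0 hW0
  refine isBounded_iff_forall_norm_le.mpr ⟨Real.exp (D * W), ?_⟩
  rintro x ⟨hx0, hxF, hxH⟩
  have hMpos : (0 : ℝ) ≤ Real.exp (D * W) := (Real.exp_pos _).le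
  rw [pi_norm_le_iff_of_nonneg hMpos]
  intro v
  rw [pi_norm_le_iff_of_nonneg hMpos]
  intro i
  set s : InfinitePlace K → ℝ := fun v =>
    ⨆ i : Fin (n + 1), (‖x v i‖ ^ (v.mult : ℝ)) ^ ((1 : ℝ) / (w i)) with hs
  have hspos : ∀ v, 0 < s v := by
    intro v
    obtain ⟨j, hj⟩ := Function.ne_iff.mp (hx0 v)
    have hterm : 0 < (‖x v j‖ ^ (v.mult : ℝ)) ^ ((1 : ℝ) / (w j)) := by
      apply Real.rpow_pos_of_pos
      apply Real.rpow_pos_of_pos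
      simpa using hj
    exact hterm.trans_le (le_ciSup (f := fun i => (‖x v i‖ ^ (v.mult : ℝ)) ^ ((1 : ℝ) / (w i))) (Set.Finite.bddAbove (Set.finite_range _)) j)
  -- sum of logs is ≤ 0
  have hSum : ∑ v, Real.log (s v) ≤ 0 := by
    rw [← Real.log_prod (s := Finset.univ) (f := s) (fun v _ => (hspos v).ne')]
    exact Real.log_nonpos (Finset.prod_nonneg fun v _ => (hspos v).le) hxH
  -- eta is log s
  have heta : etaMap w x = fun v => Real.log (s v) := rfl
  -- from membership in Ftil: log s v ≤ D
  have hlog : Real.log (s v) ≤ D := by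
    have h1 : ‖prMap K (etaMap w x)‖ ≤ C := hC _ hxF
    have h2 : |prMap K (etaMap w x) v| ≤ C := by
      calc |prMap K (etaMap w x) v| = ‖prMap K (etaMap w x) v‖ := rfl
        _ ≤ ‖prMap K (etaMap w x)‖ := norm_le_pi_norm _ v
        _ ≤ C := h1
    have h3 : prMap K (etaMap w x) v ≤ D := le_trans (le_of_abs_le h2) (le_max_left _ _)
    have h4 : ((∑ v' : InfinitePlace K, etaMap w x v') / (Module.finrank ℚ K)) * (v.mult : ℕ) ≤ 0 := by
      apply mul_nonpos_of_nonpos_of_nonneg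
      · apply div_nonpos_of_nonpos_of_nonneg
        · simpa [heta] using hSum
        · exact_mod_cast Nat.zero_le _
      · exact_mod_cast Nat.zero_le _
    simp only [heta] at h4
    have := h3
    simp only [prMap, heta] at this
    linarith
  have hsle : s v ≤ Real.exp D := (Real.log_le_iff_le_exp (hspos v)).mp hlog
  -- the i-th term is ≤ s v
  have hterm_le : (‖x v i‖ ^ (v.mult : ℝ)) ^ ((1 : ℝ) / (w i)) ≤ s v :=
    le_ciSup (f := fun i => (‖x v i‖ ^ (v.mult : ℝ)) ^ ((1 : ℝ) / (w i))) (Set.Finite.bddAbove (Set.finite_range _)) i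
  have htpos : (0:ℝ) ≤ ‖x v i‖ ^ (v.mult : ℝ) := Real.rpow_nonneg (norm_nonneg _) _
  -- a ≤ exp(D * w i)
  have ha : ‖x v i‖ ^ (v.mult : ℝ) ≤ Real.exp (D * w i) := by
    have h5 : ((‖x v i‖ ^ (v.mult : ℝ)) ^ ((1 : ℝ) / (w i))) ^ ((w i : ℕ) : ℝ)
        ≤ (Real.exp D) ^ ((w i : ℕ) : ℝ) :=
      Real.rpow_le_rpow (Real.rpow_nonneg htpos _) (hterm_le.trans hsle) (by positivity)
    rwa [← Real.rpow_mul htpos, one_div,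
      inv_mul_cancel₀ (by exact_mod_cast (hw i).ne' : ((w i : ℕ) : ℝ) ≠ 0), Real.rpow_one,
      ← Real.exp_mul] at h5
  have hwile : (w i : ℝ) ≤ W := by
    rw [hWdef]
    exact Finset.single_le_sum (f := fun j => ((w j : ℕ) : ℝ)) (fun j _ => by positivity) (Finset.mem_univ i)
  have ha' : ‖x v i‖ ^ (v.mult : ℝ) ≤ Real.exp (D * W) :=
    ha.trans (Real.exp_le_exp.mpr (mul_le_mul_of_nonneg_left hwile hD0))
  rcases le_or_gt (‖x v i‖) 1 with h | h
  · exact h.trans (Real.one_le_exp hDW)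
  · calc ‖x v i‖ = ‖x v i‖ ^ (1:ℝ) := (Real.rpow_one _).symm
      _ ≤ ‖x v i‖ ^ (v.mult : ℝ) :=
        Real.rpow_le_rpow_of_exponent_le h.le NumberField.InfinitePlace.one_le_mult
      _ ≤ Real.exp (D * W) := ha'
end
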